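/- Let L be self-adjoint in L²(μ). If D and D' are self-duality functions for L, then the matrix D''(x,x') = ⟨D(x,·), D'(x',·)⟩_μ = Σ_y D(x,y) D'(x',y) μ(y) is again a self-duality function for L. -/
import Mathlib


open Matrix BigOperators

theorem inner_product_of_selfdualities {n : ℕ}
    (L : Matrix (Fin n) (Fin n) ℝ) (μ : Fin n → ℝ) (hμ : ∀ x, 0 < μ x)
    (hsa : ∀ x y, μ x * L x y = μ y * L y x)
    (D D' : Matrix (Fin n) (Fin n) ℝ)
    (hD : L * D = D * Lᵀ) (hD' : L * D' = D' * Lᵀ)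
    (D'' : Matrix (Fin n) (Fin n) ℝ)
    (hD'' : ∀ x x', D'' x x' = ∑ y, D x y * D' x' y * μ y) :
    L * D'' = D'' * Lᵀ := by
  set M : Matrix (Fin n) (Fin n) ℝ := Matrix.diagonal μ with hM
  have hD''eq : D'' = D * M * D'ᵀ := by
    ext x x'
    rw [hD'' x x', Matrix.mul_assoc]
    rw [Matrix.mul_apply]
    refine Finset.sum_congr rfl fun y _ => ?_
    rw [hM, Matrix.diagonal_mul, Matrix.transpose_apply]
    ring
  have hML : M * L = Lᵀ * M := by
    ext x y
    simp only [hM, Matrix.diagonal_mul, Matrix.mul_diagonal, Matrix.transpose_apply]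
    rw [mul_comm (L y x)]
    exact hsa x y
  have hLD'T : L * D'ᵀ = D'ᵀ * Lᵀ := by
    have := congrArg Matrix.transpose hD'
    simpa [Matrix.transpose_mul, Matrix.transpose_transpose] using this.symm
  calc L * D'' = D * (Lᵀ * M) * D'ᵀ := by
        rw [hD''eq, ← Matrix.mul_assoc, ← Matrix.mul_assoc, hD, Matrix.mul_assoc D]
    _ = D * M * (L * D'ᵀ) := by rw [← hML]; noncomm_ring
    _ = D'' * Lᵀ := by rw [hLD'T, hD''eq]; noncomm_ring
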